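/- The ring Mat₃(R) over a commutative ring R is generated as an R-algebra by E₁₂, E₂₃, E₃₁ subject only to the relations E₁₂² = E₂₃² = E₃₁² = E₁₂E₃₁ = E₂₃E₁₂ = E₃₁E₂₃ = 0 and E₁₂E₂₃E₃₁ + E₂₃E₃₁E₁₂ + E₃₁E₁₂E₂₃ = 1. -/

import Mathlib

/-- The relations `E₁₂² = E₂₃² = E₃₁² = E₁₂E₃₁ = E₂₃E₁₂ = E₃₁E₂₃ = 0` and
`E₁₂E₂₃E₃₁ + E₂₃E₃₁E₁₂ + E₃₁E₁₂E₂₃ = 1` on the free algebra on three generators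
`E₁₂ = ι 0`, `E₂₃ = ι 1`, `E₃₁ = ι 2` over a commutative ring `R`. -/
def mat3Rel (R : Type*) [CommRing R] :
    FreeAlgebra R (Fin 3) → FreeAlgebra R (Fin 3) → Prop := fun u v =>
  letI e12 := FreeAlgebra.ι R (0 : Fin 3)
  letI e23 := FreeAlgebra.ι R (1 : Fin 3)
  letI e31 := FreeAlgebra.ι R (2 : Fin 3)
  v = 0 ∧ (
    u = e12 * e12 ∨ u = e23 * e23 ∨ u = e31 * e31 ∨
    u = e12 * e31 ∨ u = e23 * e12 ∨ u = e31 * e23 ∨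
    u = e12 * e23 * e31 + e23 * e31 * e12 + e31 * e12 * e23 - 1)

namespace Mat3Pres

open Matrix

variable (R : Type*) [CommRing R]

noncomputable def mk : FreeAlgebra R (Fin 3) →ₐ[R] RingQuot (mat3Rel R) :=
  RingQuot.mkAlgHom R (mat3Rel R)

noncomputable def A : RingQuot (mat3Rel R) := mk R (FreeAlgebra.ι R 0)
noncomputable def B : RingQuot (mat3Rel R) := mk R (FreeAlgebra.ι R 1)
noncomputable def C : RingQuot (mat3Rel R) := mk R (FreeAlgebra.ι R 2)

variable {R}

lemma rel {u v : FreeAlgebra R (Fin 3)} (h : mat3Rel R u v) : mk R u = mk R v :=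
  RingQuot.mkAlgHom_rel R h

lemma hA2 : A R * A R = 0 := by
  have := rel (R := R) ⟨rfl, Or.inl rfl⟩
  simpa [A, _root_.map_mul] using this

lemma hB2 : B R * B R = 0 := by
  have := rel (R := R) ⟨rfl, Or.inr (Or.inl rfl)⟩
  simpa [B, _root_.map_mul] using this

lemma hC2 : C R * C R = 0 := by
  have := rel (R := R) ⟨rfl, Or.inr (Or.inr (Or.inl rfl))⟩
  simpa [C, _root_.map_mul] using this

lemma hAC : A R * C R = 0 := by
  have := rel (R := R) ⟨rfl, Or.inr (Or.inr (Or.inr (Or.inl rfl)))⟩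
  simpa [A, C, _root_.map_mul] using this

lemma hBA : B R * A R = 0 := by
  have := rel (R := R) ⟨rfl, Or.inr (Or.inr (Or.inr (Or.inr (Or.inl rfl))))⟩
  simpa [A, B, _root_.map_mul] using this

lemma hCB : C R * B R = 0 := by
  have := rel (R := R) ⟨rfl, Or.inr (Or.inr (Or.inr (Or.inr (Or.inr (Or.inl rfl)))))⟩
  simpa [B, C, _root_.map_mul] using this

lemma hone : A R * B R * C R + B R * C R * A R + C R * A R * B R = 1 := by
  have := rel (R := R) ⟨rfl, Or.inr (Or.inr (Or.inr (Or.inr (Or.inr (Or.inr rfl)))))⟩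
  have h2 : mk R (FreeAlgebra.ι R 0 * FreeAlgebra.ι R 1 * FreeAlgebra.ι R 2 +
      FreeAlgebra.ι R 1 * FreeAlgebra.ι R 2 * FreeAlgebra.ι R 0 +
      FreeAlgebra.ι R 2 * FreeAlgebra.ι R 0 * FreeAlgebra.ι R 1 - 1) = 0 := by
    simpa using this
  have := sub_eq_zero.mp (by simpa [map_sub, map_add, _root_.map_mul, _root_.map_one] using h2)
  simpa [A, B, C, _root_.map_mul] using this


noncomputable def phi : RingQuot (mat3Rel R) →ₐ[R] Matrix (Fin 3) (Fin 3) R :=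
  RingQuot.liftAlgHom R ⟨FreeAlgebra.lift R
    ![single 0 1 1, single 1 2 1, single 2 0 1], by
    rintro u v ⟨rfl, rfl | rfl | rfl | rfl | rfl | rfl | rfl⟩ <;>
      simp [FreeAlgebra.lift_ι_apply, Matrix.single_mul_single_of_ne,
        Matrix.single_mul_single_same]
    ext i j
    fin_cases i <;> fin_cases j <;>
      simp [Matrix.single, Matrix.one_apply]⟩

lemma phi_A : phi (A R) = single 0 1 (1 : R) := by
  simp [phi, A, mk, RingQuot.liftAlgHom_mkAlgHom_apply, FreeAlgebra.lift_ι_apply]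

lemma phi_B : phi (B R) = single 1 2 (1 : R) := by
  simp [phi, B, mk, RingQuot.liftAlgHom_mkAlgHom_apply, FreeAlgebra.lift_ι_apply]

lemma phi_C : phi (C R) = single 2 0 (1 : R) := by
  simp [phi, C, mk, RingQuot.liftAlgHom_mkAlgHom_apply, FreeAlgebra.lift_ι_apply]


lemma zA (t : RingQuot (mat3Rel R)) : A R * (A R * t) = 0 := by
  rw [← mul_assoc, hA2, zero_mul]
lemma zB (t : RingQuot (mat3Rel R)) : B R * (B R * t) = 0 := by
  rw [← mul_assoc, hB2, zero_mul]
lemma zC (t : RingQuot (mat3Rel R)) : C R * (C R * t) = 0 := by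
  rw [← mul_assoc, hC2, zero_mul]
lemma zAC (t : RingQuot (mat3Rel R)) : A R * (C R * t) = 0 := by
  rw [← mul_assoc, hAC, zero_mul]
lemma zBA (t : RingQuot (mat3Rel R)) : B R * (A R * t) = 0 := by
  rw [← mul_assoc, hBA, zero_mul]
lemma zCB (t : RingQuot (mat3Rel R)) : C R * (B R * t) = 0 := by
  rw [← mul_assoc, hCB, zero_mul]

lemma hABCA : A R * (B R * (C R * A R)) = A R := by
  have h := congrArg (fun z => A R * z) hone
  simp only [mul_add, mul_one, mul_assoc, zA, zAC, zero_add, add_zero] at h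
  exact h

lemma hBCAB : B R * (C R * (A R * B R)) = B R := by
  have h := congrArg (fun z => B R * z) hone
  simp only [mul_add, mul_one, mul_assoc, zB, zBA, zero_add, add_zero] at h
  exact h

lemma hCABC : C R * (A R * (B R * C R)) = C R := by
  have h := congrArg (fun z => C R * z) hone
  simp only [mul_add, mul_one, mul_assoc, zC, zCB, zero_add, add_zero] at h
  exact h

variable (R)

noncomputable def X : Fin 3 → Fin 3 → RingQuot (mat3Rel R) :=
  ![![A R * B R * C R, A R, A R * B R],
    ![B R * C R, B R * C R * A R, B R],
    ![C R, C R * A R, C R * A R * B R]]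

noncomputable def psi : Matrix (Fin 3) (Fin 3) R →ₗ[R] RingQuot (mat3Rel R) where
  toFun M := ∑ i, ∑ j, M i j • X R i j
  map_add' := by intro M N; simp [add_smul, Finset.sum_add_distrib]
  map_smul' := by intro c M; simp [smul_smul, Finset.smul_sum]

noncomputable def gen : Fin 3 → RingQuot (mat3Rel R) := ![A R, B R, C R]

variable {R}

lemma psi_std (i j : Fin 3) (c : R) :
    psi R (single i j c) = c • X R i j := by
  fin_cases i <;> fin_cases j <;>
    simp [psi, single, Fin.sum_univ_succ]

lemma phi_gen (i : Fin 3) :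
    phi (gen R i) = single i (i + 1) (1 : R) := by
  fin_cases i <;> simp [gen, phi_A, phi_B, phi_C]

lemma phi_X (i j : Fin 3) : phi (X R i j) = single i j (1 : R) := by
  fin_cases i <;> fin_cases j <;>
    simp [X, _root_.map_mul, phi_A, phi_B, phi_C,
      Matrix.single_mul_single_same, Matrix.single_mul_single_of_ne]

lemma key (i : Fin 3) (M : Matrix (Fin 3) (Fin 3) R) :
    psi R (phi (gen R i) * M) = gen R i * psi R M := by
  induction M using Matrix.induction_on' with
  | h_zero => simp
  | h_add p q hp hq => simp only [mul_add, map_add, hp, hq]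
  | h_std_basis k l c =>
      rw [phi_gen]
      fin_cases i <;> fin_cases k <;> fin_cases l <;>
        simp [Matrix.single_mul_single_same, Matrix.single_mul_single_of_ne,
          psi_std, gen, X, mul_smul_comm, mul_assoc,
          zA, zB, zC, zAC, zBA, zCB, hABCA, hBCAB, hCABC,
          hA2, hB2, hC2, hAC, hBA, hCB]

lemma psi_phi_one : psi R (phi 1) = 1 := by
  have h1 : (1 : Matrix (Fin 3) (Fin 3) R) =
      single 0 0 1 + single 1 1 1 + single 2 2 1 := by
    ext i j
    fin_cases i <;> fin_cases j <;> simp [single, Matrix.one_apply]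
  rw [_root_.map_one, h1]
  simp only [map_add, psi_std, one_smul]
  show X R 0 0 + X R 1 1 + X R 2 2 = 1
  simpa [X] using hone (R := R)

lemma psi_phi (z : RingQuot (mat3Rel R)) : psi R (phi z) = z := by
  obtain ⟨x, rfl⟩ := RingQuot.mkAlgHom_surjective R (mat3Rel R) z
  have main : ∀ x : FreeAlgebra R (Fin 3), ∀ z : RingQuot (mat3Rel R),
      psi R (phi z) = z → psi R (phi (mk R x * z)) = mk R x * z := by
    intro x
    induction x using FreeAlgebra.induction with
    | grade0 r =>
        intro z hz
        rw [AlgHom.commutes, ← Algebra.smul_def, _root_.map_smul, _root_.map_smul, hz]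
    | grade1 i =>
        intro z hz
        have : mk R (FreeAlgebra.ι R i) = gen R i := by
          fin_cases i <;> rfl
        rw [this, _root_.map_mul, key, hz]
    | mul x y hx hy =>
        intro z hz
        rw [_root_.map_mul (mk R), mul_assoc]
        exact hx _ (hy _ hz)
    | add x y hx hy =>
        intro z hz
        rw [map_add, add_mul]
        rw [map_add, map_add, hx _ hz, hy _ hz]
  simpa [mk] using main x 1 psi_phi_one

lemma phi_psi (M : Matrix (Fin 3) (Fin 3) R) : phi (psi R M) = M := by
  induction M using Matrix.induction_on' with
  | h_zero => simp
  | h_add p q hp hq => rw [map_add, map_add, hp, hq]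
  | h_std_basis i j c =>
      rw [psi_std, _root_.map_smul, phi_X, Matrix.smul_single, smul_eq_mul, mul_one]

end Mat3Pres

/-- `Mat₃(R)` is generated as an `R`-algebra by the matrix units `E₁₂`, `E₂₃`, `E₃₁`
subject only to the relations `E₁₂² = E₂₃² = E₃₁² = E₁₂E₃₁ = E₂₃E₁₂ = E₃₁E₂₃ = 0` and
`E₁₂E₂₃E₃₁ + E₂₃E₃₁E₁₂ + E₃₁E₁₂E₂₃ = 1`: the natural map from the presented algebra to
`Mat₃(R)` is an isomorphism. -/
theorem mat3_presentation (R : Type*) [CommRing R] :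
    ∃ θ : RingQuot (mat3Rel R) ≃ₐ[R] Matrix (Fin 3) (Fin 3) R,
      θ (RingQuot.mkAlgHom R (mat3Rel R) (FreeAlgebra.ι R 0)) =
        Matrix.single 0 1 1 ∧
      θ (RingQuot.mkAlgHom R (mat3Rel R) (FreeAlgebra.ι R 1)) =
        Matrix.single 1 2 1 ∧
      θ (RingQuot.mkAlgHom R (mat3Rel R) (FreeAlgebra.ι R 2)) =
        Matrix.single 2 0 1 := by
  refine ⟨AlgEquiv.ofBijective Mat3Pres.phi
    ⟨Function.LeftInverse.injective Mat3Pres.psi_phi,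
     fun M => ⟨Mat3Pres.psi R M, Mat3Pres.phi_psi M⟩⟩, ?_, ?_, ?_⟩ <;>
    show Mat3Pres.phi _ = _
  · exact Mat3Pres.phi_A
  · exact Mat3Pres.phi_B
  · exact Mat3Pres.phi_C
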